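/- Let b ≥ 2 be a natural number and set r = 1 − 1/b². For any w₀ > 0, if b is chosen large enough that 1 − exp(−w₀) < 1 − 1/b², then any sequence (wₙ) of nonnegative reals with w_{n+1} ≤ ((1 − exp(−wₙ))/r)·wₙ converges to 0. -/
import Mathlib


theorem stmt_4 (b : ℕ) (hb : 2 ≤ b) (r : ℝ) (hr : r = 1 - 1 / (b : ℝ) ^ 2)
    (w : ℕ → ℝ) (hnn : ∀ n, 0 ≤ w n) (hw0 : 0 < w 0)
    (hlarge : 1 - Real.exp (-(w 0)) < 1 - 1 / (b : ℝ) ^ 2)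
    (hrec : ∀ n, w (n + 1) ≤ ((1 - Real.exp (-(w n))) / r) * w n) :
    Filter.Tendsto w Filter.atTop (nhds 0) := by
  have hb2 : (2 : ℝ) ≤ (b : ℝ) := by exact_mod_cast hb
  have hbsq : (4 : ℝ) ≤ (b : ℝ) ^ 2 := by nlinarith
  have hrpos : 0 < r := by
    rw [hr]
    have : 1 / (b : ℝ) ^ 2 ≤ 1 / 4 := by
      apply one_div_le_one_div_of_le <;> linarith
    linarith
  set q : ℝ := (1 - Real.exp (-(w 0))) / r with hq
  have hq0 : 0 ≤ q := by
    apply div_nonneg _ hrpos.le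
    have := Real.exp_le_one_iff.mpr (by linarith : -(w 0) ≤ 0)
    linarith
  have hq1 : q < 1 := by
    rw [hq, div_lt_one hrpos, hr]
    linarith
  have key : ∀ n, w n ≤ q ^ n * w 0 := by
    intro n
    induction n with
    | zero => simp
    | succ n ih =>
      have hwle : w n ≤ w 0 := by
        have : q ^ n ≤ 1 := pow_le_one₀ hq0 hq1.le
        nlinarith
      have hexp : Real.exp (-(w 0)) ≤ Real.exp (-(w n)) :=
        Real.exp_le_exp.mpr (by linarith)
      have hstep : ((1 - Real.exp (-(w n))) / r) ≤ q := by
        rw [hq]; gcongr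
      have := hrec n
      calc w (n + 1) ≤ ((1 - Real.exp (-(w n))) / r) * w n := this
        _ ≤ q * w n := mul_le_mul_of_nonneg_right hstep (hnn n)
        _ ≤ q * (q ^ n * w 0) := mul_le_mul_of_nonneg_left ih hq0
        _ = q ^ (n + 1) * w 0 := by ring
  have hgeo : Filter.Tendsto (fun n => q ^ n * w 0) Filter.atTop (nhds 0) := by
    have := tendsto_pow_atTop_nhds_zero_of_lt_one hq0 hq1
    simpa using this.mul_const (w 0)
  exact squeeze_zero hnn key hgeo
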